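/- Let A, B be n×n Hermitian matrices such that (λ(B+A) − λ(A)) rearranged in nonincreasing order equals λ(B). Then A and B commute. -/

import Mathlib

open Matrix BigOperators
open scoped ComplexOrder

noncomputable def sortDesc {q : ℕ} (x : Fin q → ℝ) : Fin q → ℝ :=
  fun i => (x ∘ Tuple.sort x) i.rev

noncomputable def sval {m n : ℕ} (F : Matrix (Fin m) (Fin n) ℂ) :
    Fin (min m n) → ℝ :=
  fun i => Real.sqrt (sortDesc (Matrix.posSemidef_conjTranspose_mul_self F).isHermitian.eigenvalues
    ⟨i, lt_of_lt_of_le i.isLt (min_le_right m n)⟩)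

def IsPartialIsometry {m n : ℕ} (X : Matrix (Fin m) (Fin n) ℂ) : Prop :=
  ∀ f ∈ (LinearMap.ker (Matrix.toEuclideanLin X))ᗮ, ‖Matrix.toEuclideanLin X f‖ = ‖f‖

noncomputable def matAbs {m n : ℕ} (F : Matrix (Fin m) (Fin n) ℂ) :
    Matrix (Fin n) (Fin n) ℂ :=
  (Matrix.posSemidef_conjTranspose_mul_self F).1.eigenvectorUnitary.1 *
    diagonal ((↑) ∘ (√·) ∘ (Matrix.posSemidef_conjTranspose_mul_self F).1.eigenvalues) *
    (star (Matrix.posSemidef_conjTranspose_mul_self F).1.eigenvectorUnitary : Matrix (Fin n) (Fin n) ℂ)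

noncomputable def svdSigma {m n : ℕ} (F : Matrix (Fin m) (Fin n) ℂ) :
    Matrix (Fin m) (Fin n) ℂ :=
  fun i j => if h : (i : ℕ) = (j : ℕ) ∧ (i : ℕ) < min m n
    then (sval F ⟨i, h.2⟩ : ℂ) else 0

def IsSVD {m n : ℕ} (F : Matrix (Fin m) (Fin n) ℂ)
    (V : Matrix (Fin m) (Fin m) ℂ) (W : Matrix (Fin n) (Fin n) ℂ) : Prop :=
  V ∈ Matrix.unitaryGroup (Fin m) ℂ ∧ W ∈ Matrix.unitaryGroup (Fin n) ℂ ∧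
    F = V * svdSigma F * Wᴴ

def blockIso {m n : ℕ} (r : ℕ) (S : Matrix (Fin (m - r)) (Fin (n - r)) ℂ) :
    Matrix (Fin m) (Fin n) ℂ :=
  fun i j =>
    if (i : ℕ) < r ∧ (j : ℕ) < r then (if (i : ℕ) = (j : ℕ) then 1 else 0)
    else if h : r ≤ (i : ℕ) ∧ r ≤ (j : ℕ) then
      S ⟨(i : ℕ) - r, by have := i.isLt; omega⟩ ⟨(j : ℕ) - r, by have := j.isLt; omega⟩
    else 0

def submajW {q : ℕ} (x y : Fin q → ℝ) : Prop :=
  ∀ k : ℕ, k ≤ q →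
    (∑ i : Fin q, if (i : ℕ) < k then sortDesc x i else 0) ≤
      (∑ i : Fin q, if (i : ℕ) < k then sortDesc y i else 0)

structure SymmGauge (q : ℕ) where
  Φ : (Fin q → ℝ) → ℝ
  add_le : ∀ x y, Φ (x + y) ≤ Φ x + Φ y
  smul_eq : ∀ (c : ℝ) x, Φ (c • x) = |c| * Φ x
  eq_zero : ∀ x, Φ x = 0 → x = 0
  symm : ∀ (σ : Equiv.Perm (Fin q)) (ε : Fin q → ℝ) (x : Fin q → ℝ),
    (∀ i, ε i = 1 ∨ ε i = -1) → Φ (fun i => ε i * x (σ i)) = Φ x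

def SymmGauge.StrictlyConvex {q : ℕ} (G : SymmGauge q) : Prop :=
  ∀ x y, x ≠ y → G.Φ x = 1 → G.Φ y = 1 →
    ∀ t : ℝ, 0 < t → t < 1 → G.Φ (t • x + (1 - t) • y) < 1

noncomputable def gaugeNorm {m n : ℕ} (G : SymmGauge (min m n))
    (M : Matrix (Fin m) (Fin n) ℂ) : ℝ :=
  G.Φ (sval M)

noncomputable def projMat {m : ℕ} (S : Submodule ℂ (EuclideanSpace ℂ (Fin m))) :
    Matrix (Fin m) (Fin m) ℂ :=
  Matrix.toEuclideanLin.symm (S.subtype ∘ₗ (S.orthogonalProjectionOnto).toLinearMap)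

noncomputable def frobNorm {m n : ℕ} (M : Matrix (Fin m) (Fin n) ℂ) : ℝ :=
  Real.sqrt (∑ i, ∑ j, ‖M i j‖ ^ 2)

def IsMinPI {m n : ℕ} (G : SymmGauge (min m n)) (F : Matrix (Fin m) (Fin n) ℂ)
    (k : ℕ) (X : Matrix (Fin m) (Fin n) ℂ) : Prop :=
  IsPartialIsometry X ∧ X.rank = k ∧
    ∀ Y : Matrix (Fin m) (Fin n) ℂ, IsPartialIsometry Y → Y.rank = k →
      gaugeNorm G (F - X) ≤ gaugeNorm G (F - Y)

def TriConstr {q : ℕ} (k : ℕ) (x : Fin q → ℝ) : Prop :=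
  (∀ j, x j = -1 ∨ x j = 0 ∨ x j = 1) ∧ {j : Fin q | x j ≠ 0}.ncard = k

namespace Stmt7Aux
open Finset

lemma sum_sortDesc {q : ℕ} (x : Fin q → ℝ) (g : ℝ → ℝ) :
    ∑ i, g (sortDesc x i) = ∑ i, g (x i) :=
  Fintype.sum_equiv (Fin.revPerm.trans (Tuple.sort x)) _ _ (fun _ => rfl)

lemma sortDesc_antitone {q : ℕ} (x : Fin q → ℝ) : Antitone (sortDesc x) := by
  intro i j hij
  exact Tuple.monotone_sort x (Fin.rev_le_rev.mpr hij)

lemma trace_gram {n : ℕ} (M : Matrix (Fin n) (Fin n) ℂ) :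
    (Mᴴ * M).trace = ((∑ i, ∑ j, ‖M j i‖ ^ 2 : ℝ) : ℂ) := by
  simp only [Matrix.trace, Matrix.diag, Matrix.mul_apply, Matrix.conjTranspose_apply]
  push_cast
  congr 1; ext i; congr 1; ext j
  rw [← Complex.mul_conj']
  simp [mul_comm]

lemma eq_zero_of_trace_gram {n : ℕ} (M : Matrix (Fin n) (Fin n) ℂ)
    (h : (Mᴴ * M).trace = 0) : M = 0 := by
  rw [trace_gram] at h
  have h' : (∑ i, ∑ j, ‖M j i‖ ^ 2 : ℝ) = 0 := by exact_mod_cast h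
  ext i j
  have h2 := (Finset.sum_eq_zero_iff_of_nonneg (by intro _ _; positivity)).mp h' j (Finset.mem_univ _)
  have h4 := (Finset.sum_eq_zero_iff_of_nonneg (by intro _ _; positivity)).mp h2 i (Finset.mem_univ _)
  simpa using h4

variable {n : ℕ} {P Q : Matrix (Fin n) (Fin n) ℂ}

lemma gram_PQP (hP1 : Pᴴ = P) (hQ1 : Qᴴ = Q) (hQ2 : Q * Q = Q) :
    (Q * P)ᴴ * (Q * P) = P * Q * P := by
  rw [conjTranspose_mul, hP1, hQ1]
  calc P * Q * (Q * P) = P * (Q * Q) * P := by simp only [Matrix.mul_assoc]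
    _ = P * Q * P := by rw [hQ2, Matrix.mul_assoc]

lemma trace_PQ_eq (hP1 : Pᴴ = P) (hP2 : P * P = P) (hQ1 : Qᴴ = Q) (hQ2 : Q * Q = Q) :
    (P * Q).trace = ((Q * P)ᴴ * (Q * P)).trace := by
  rw [gram_PQP hP1 hQ1 hQ2, Matrix.trace_mul_cycle, hP2]

lemma one_sub_herm (hQ1 : Qᴴ = Q) : (1 - Q)ᴴ = 1 - Q := by simp [hQ1]

lemma one_sub_idem (hQ2 : Q * Q = Q) : (1 - Q) * (1 - Q) = 1 - Q := by
  simp [Matrix.mul_sub, Matrix.sub_mul, hQ2]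

lemma trace_P_sub_PQ (hP1 : Pᴴ = P) (hP2 : P * P = P) (hQ1 : Qᴴ = Q) (hQ2 : Q * Q = Q) :
    P.trace - (P * Q).trace = ((∑ i, ∑ j, ‖((1 - Q) * P) j i‖ ^ 2 : ℝ) : ℂ) := by
  have key2 := trace_PQ_eq hP1 hP2 (one_sub_herm hQ1) (one_sub_idem hQ2)
  rw [trace_gram] at key2
  have hsub : (P * (1 - Q)).trace = P.trace - (P * Q).trace := by
    simp [Matrix.mul_sub]
  rw [hsub] at key2
  exact key2

/-- trace of product of two orthoprojections is a real number in [0, tr P] -/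
lemma trace_PQ_spec (hP1 : Pᴴ = P) (hP2 : P * P = P) (hQ1 : Qᴴ = Q) (hQ2 : Q * Q = Q) :
    (P * Q).trace = (((P * Q).trace.re : ℝ) : ℂ) ∧ 0 ≤ (P * Q).trace.re ∧
      (P * Q).trace.re ≤ P.trace.re := by
  have key := trace_PQ_eq hP1 hP2 hQ1 hQ2
  rw [trace_gram] at key
  have key2 := trace_P_sub_PQ hP1 hP2 hQ1 hQ2
  have hre : (P * Q).trace = (((P * Q).trace.re : ℝ) : ℂ) := by rw [key, Complex.ofReal_re]
  refine ⟨hre, ?_, ?_⟩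
  · have h0 : (P * Q).trace.re = (∑ i, ∑ j, ‖(Q * P) j i‖ ^ 2 : ℝ) := by
      rw [key, Complex.ofReal_re]
    rw [h0]; positivity
  · have h4 : P.trace = (P*Q).trace + ((∑ i, ∑ j, ‖((1 - Q) * P) j i‖ ^ 2 : ℝ) : ℂ) := by
      rw [← key2]; ring
    have h5 : P.trace.re = (P*Q).trace.re + (∑ i, ∑ j, ‖((1 - Q) * P) j i‖ ^ 2 : ℝ) := by
      rw [h4, Complex.add_re, Complex.ofReal_re]
    have : (0:ℝ) ≤ ∑ i, ∑ j, ‖((1 - Q) * P) j i‖ ^ 2 := by positivity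
    linarith

lemma proj_comm_of_trace_eq (hP1 : Pᴴ = P) (hP2 : P * P = P) (hQ1 : Qᴴ = Q) (hQ2 : Q * Q = Q)
    (h : (P * Q).trace = P.trace) : P * Q = Q * P := by
  have key2 := trace_P_sub_PQ hP1 hP2 hQ1 hQ2
  rw [h, sub_self] at key2
  have key3 : (((1 - Q) * P)ᴴ * ((1 - Q) * P)).trace = 0 := by
    rw [trace_gram, ← key2]
  have hz : (1 - Q) * P = 0 := eq_zero_of_trace_gram _ key3
  have hQP : Q * P = P := by
    have h1 : P - Q * P = 0 := by rw [← hz, Matrix.sub_mul, Matrix.one_mul]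
    have := sub_eq_zero.mp h1
    exact this.symm
  have hPQ : P * Q = P := by
    have := congrArg conjTranspose hQP
    rwa [conjTranspose_mul, hP1, hQ1] at this
  rw [hPQ, hQP]


/-- telescoping representation of a tuple -/
lemma tele {n : ℕ} (a : Fin n → ℝ) (i : Fin n) :
    a i = a ⟨n-1, by have := i.isLt; omega⟩ + ∑ k ∈ Finset.range n,
      (if h : 1 ≤ k ∧ k < n then a ⟨k-1, by omega⟩ - a ⟨k, h.2⟩ else 0) *
        (if (i:ℕ) < k then 1 else 0) := by
  have hn : (i:ℕ) < n := i.isLt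
  set g : ℕ → ℝ := fun m => if h : m < n then a ⟨m, h⟩ else 0 with hg
  have step : ∀ k ∈ Finset.range n,
      (if h : 1 ≤ k ∧ k < n then a ⟨k-1, by omega⟩ - a ⟨k, h.2⟩ else 0) *
        (if (i:ℕ) < k then 1 else 0)
      = (if (i:ℕ) < k then g (k-1) - g k else 0) := by
    intro k hk
    rw [Finset.mem_range] at hk
    by_cases hik : (i:ℕ) < k
    · have h1 : 1 ≤ k := by omega
      rw [if_pos hik, if_pos hik, dif_pos ⟨h1, hk⟩, mul_one, hg]
      simp only []
      rw [dif_pos (by omega : k - 1 < n), dif_pos hk]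
    · rw [if_neg hik, if_neg hik, mul_zero]
  rw [Finset.sum_congr rfl step]
  have expand : ∀ m : ℕ, ∑ k ∈ Finset.range m, (if (i:ℕ) < k then g (k-1) - g k else 0)
      = g i - g (max (m-1) (i:ℕ)) := by
    intro m
    induction m with
    | zero => simp
    | succ m ih =>
      rw [Finset.sum_range_succ, ih]
      by_cases him : (i:ℕ) < m
      · have h1 : max (m-1) (i:ℕ) = m-1 := by omega
        have h2 : max (m+1-1) (i:ℕ) = m := by omega
        rw [if_pos him, h1, h2]
        ring
      · rw [if_neg him]
        have h1 : max (m-1) (i:ℕ) = (i:ℕ) ∨ m = 0 ∨ m = (i:ℕ)+1 := by omega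
        have h2 : max (m+1-1) (i:ℕ) = max m (i:ℕ) := by omega
        have h3 : max m (i:ℕ) = (i:ℕ) := by omega
        have h4 : max (m-1) (i:ℕ) = (i:ℕ) := by omega
        rw [h2, h3, h4, add_zero]
  rw [expand n]
  have h5 : max (n-1) (i:ℕ) = n-1 := by omega
  rw [h5, hg]
  simp only []
  rw [dif_pos hn, dif_pos (by omega : n - 1 < n)]
  ring


variable {n : ℕ} {A : Matrix (Fin n) (Fin n) ℂ}

noncomputable def τ {q : ℕ} (x : Fin q → ℝ) : Equiv.Perm (Fin q) :=
  Fin.revPerm.trans (Tuple.sort x)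

lemma sortDesc_eq_comp {q : ℕ} (x : Fin q → ℝ) (i : Fin q) : sortDesc x i = x (τ x i) := rfl

noncomputable def indD (hA : A.IsHermitian) (k : ℕ) : Matrix (Fin n) (Fin n) ℂ :=
  Matrix.diagonal (fun j => if (((τ hA.eigenvalues).symm j : Fin n) : ℕ) < k then (1:ℂ) else 0)

noncomputable def projOf (hA : A.IsHermitian) (k : ℕ) : Matrix (Fin n) (Fin n) ℂ :=
  (hA.eigenvectorUnitary : Matrix (Fin n) (Fin n) ℂ) * indD hA k *
    star (hA.eigenvectorUnitary : Matrix (Fin n) (Fin n) ℂ)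

lemma star_mul_self_eigen (hA : A.IsHermitian) :
    star (hA.eigenvectorUnitary : Matrix (Fin n) (Fin n) ℂ) *
      (hA.eigenvectorUnitary : Matrix (Fin n) (Fin n) ℂ) = 1 :=
  Unitary.coe_star_mul_self hA.eigenvectorUnitary

lemma indD_herm (hA : A.IsHermitian) (k : ℕ) : (indD hA k)ᴴ = indD hA k := by
  unfold indD
  rw [diagonal_conjTranspose]
  have : (star fun j => if (((τ hA.eigenvalues).symm j : Fin n) : ℕ) < k then (1:ℂ) else 0)
      = fun j => if (((τ hA.eigenvalues).symm j : Fin n) : ℕ) < k then (1:ℂ) else 0 := by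
    funext j
    by_cases h : (((τ hA.eigenvalues).symm j : Fin n) : ℕ) < k <;> simp [h, Pi.star_apply]
  rw [this]

lemma projOf_herm (hA : A.IsHermitian) (k : ℕ) : (projOf hA k)ᴴ = projOf hA k := by
  unfold projOf
  rw [conjTranspose_mul, conjTranspose_mul, indD_herm, Matrix.star_eq_conjTranspose,
    conjTranspose_conjTranspose, Matrix.mul_assoc]

lemma indD_idem (hA : A.IsHermitian) (k : ℕ) : indD hA k * indD hA k = indD hA k := by
  unfold indD
  rw [diagonal_mul_diagonal]
  have : (fun j => (if (((τ hA.eigenvalues).symm j : Fin n) : ℕ) < k then (1:ℂ) else 0)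
        * (if (((τ hA.eigenvalues).symm j : Fin n) : ℕ) < k then (1:ℂ) else 0))
      = fun j => if (((τ hA.eigenvalues).symm j : Fin n) : ℕ) < k then (1:ℂ) else 0 := by
    funext j
    by_cases h : (((τ hA.eigenvalues).symm j : Fin n) : ℕ) < k <;> simp [h]
  rw [this]

lemma projOf_idem (hA : A.IsHermitian) (k : ℕ) : projOf hA k * projOf hA k = projOf hA k := by
  unfold projOf
  have h1 := star_mul_self_eigen hA
  calc (hA.eigenvectorUnitary : Matrix (Fin n) (Fin n) ℂ) * indD hA k *
        star (hA.eigenvectorUnitary : Matrix (Fin n) (Fin n) ℂ) *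
        ((hA.eigenvectorUnitary : Matrix (Fin n) (Fin n) ℂ) * indD hA k *
        star (hA.eigenvectorUnitary : Matrix (Fin n) (Fin n) ℂ))
      = (hA.eigenvectorUnitary : Matrix (Fin n) (Fin n) ℂ) * (indD hA k *
        ((star (hA.eigenvectorUnitary : Matrix (Fin n) (Fin n) ℂ) *
          (hA.eigenvectorUnitary : Matrix (Fin n) (Fin n) ℂ)) * indD hA k)) *
        star (hA.eigenvectorUnitary : Matrix (Fin n) (Fin n) ℂ) := by
        simp only [Matrix.mul_assoc]
    _ = _ := by rw [h1, Matrix.one_mul, indD_idem]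

lemma filter_range {k : ℕ} (hk : k ≤ n) :
    (Finset.range n).filter (fun m => m < k) = Finset.range k := by
  ext m; simp only [Finset.mem_filter, Finset.mem_range]; omega

lemma card_lt {R : Type*} [Semiring R] {k : ℕ} (hk : k ≤ n) :
    ∑ i : Fin n, (if (i:ℕ) < k then (1:R) else 0) = (k:R) := by
  rw [Fin.sum_univ_eq_sum_range (fun m => if m < k then (1:R) else 0) n,
    ← Finset.sum_filter, filter_range hk, Finset.sum_const, Finset.card_range]
  simp

lemma card_lt2 {k l : ℕ} (hk : k ≤ n) (hl : l ≤ n) :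
    ∑ i : Fin n, (if (i:ℕ) < k then (1:ℝ) else 0) * (if (i:ℕ) < l then (1:ℝ) else 0)
      = ((min k l : ℕ) : ℝ) := by
  have : ∀ i : Fin n, (if (i:ℕ) < k then (1:ℝ) else 0) * (if (i:ℕ) < l then (1:ℝ) else 0)
      = (if (i:ℕ) < min k l then (1:ℝ) else 0) := by
    intro i
    by_cases h1 : (i:ℕ) < k <;> by_cases h2 : (i:ℕ) < l <;>
      simp [h1, h2, lt_min_iff]
  rw [Finset.sum_congr rfl (fun i _ => this i), card_lt (le_trans (min_le_left _ _) hk)]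

lemma trace_indD (hA : A.IsHermitian) {k : ℕ} (hk : k ≤ n) : (indD hA k).trace = (k:ℂ) := by
  unfold indD
  rw [Matrix.trace_diagonal]
  rw [Fintype.sum_equiv (τ hA.eigenvalues)
    (fun i => if ((i:Fin n):ℕ) < k then (1:ℂ) else 0)
    (fun j => if (((τ hA.eigenvalues).symm j : Fin n) : ℕ) < k then (1:ℂ) else 0)
    (fun i => by simp) |>.symm]
  exact card_lt hk

lemma trace_projOf (hA : A.IsHermitian) {k : ℕ} (hk : k ≤ n) : (projOf hA k).trace = (k:ℂ) := by
  unfold projOf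
  rw [Matrix.trace_mul_cycle, star_mul_self_eigen hA, Matrix.one_mul, trace_indD hA hk]


noncomputable def delta (hA : A.IsHermitian) (k : ℕ) : ℝ :=
  if h : 1 ≤ k ∧ k < n then
    sortDesc hA.eigenvalues ⟨k-1, by omega⟩ - sortDesc hA.eigenvalues ⟨k, h.2⟩ else 0


lemma delta_nonneg (hA : A.IsHermitian) (k : ℕ) : 0 ≤ delta hA k := by
  unfold delta
  by_cases h : 1 ≤ k ∧ k < n
  · rw [dif_pos h]
    have := sortDesc_antitone hA.eigenvalues
      (show (⟨k-1, by omega⟩ : Fin n) ≤ ⟨k, h.2⟩ from Fin.mk_le_mk.mpr (by omega))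
    linarith
  · rw [dif_neg h]

lemma eigen_eq_sort (hA : A.IsHermitian) (j : Fin n) :
    hA.eigenvalues j = sortDesc hA.eigenvalues ((τ hA.eigenvalues).symm j) := by
  have : sortDesc hA.eigenvalues ((τ hA.eigenvalues).symm j)
      = hA.eigenvalues ((τ hA.eigenvalues) ((τ hA.eigenvalues).symm j)) := rfl
  rw [this, Equiv.apply_symm_apply]

lemma scalar_decomp (hA : A.IsHermitian) (hn : 1 ≤ n) (i : Fin n) :
    sortDesc hA.eigenvalues i = sortDesc hA.eigenvalues ⟨n-1, by omega⟩
      + ∑ k ∈ Finset.range n, delta hA k * (if (i:ℕ) < k then 1 else 0) := by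
  have h := tele (sortDesc hA.eigenvalues) i
  rw [h]
  show _ = _ + ∑ k ∈ Finset.range n, delta hA k * _
  unfold delta
  rfl

lemma diag_decomp (hA : A.IsHermitian) (hn : 1 ≤ n) :
    Matrix.diagonal (RCLike.ofReal ∘ hA.eigenvalues) =
      ((sortDesc hA.eigenvalues ⟨n-1, by omega⟩ : ℝ) : ℂ) • (1 : Matrix (Fin n) (Fin n) ℂ)
      + ∑ k ∈ Finset.range n, ((delta hA k : ℝ) : ℂ) • indD hA k := by
  ext i j
  by_cases hij : i = j
  · subst hij
    simp only [Matrix.diagonal_apply_eq, Function.comp_apply, Matrix.add_apply,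
      Matrix.smul_apply, Matrix.one_apply_eq, Matrix.sum_apply, indD,
      Matrix.diagonal_apply_eq, smul_eq_mul, mul_one]
    rw [eigen_eq_sort hA i, scalar_decomp hA hn ((τ hA.eigenvalues).symm i)]
    push_cast
    congr 1
    refine Finset.sum_congr rfl (fun k hk => ?_)
    by_cases h : (((τ hA.eigenvalues).symm i : Fin n) : ℕ) < k <;> simp [h]
  · simp only [Matrix.diagonal_apply_ne _ hij, Matrix.add_apply, Matrix.smul_apply,
      Matrix.one_apply_ne hij, Matrix.sum_apply, indD, Matrix.diagonal_apply_ne _ hij,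
      smul_eq_mul, mul_zero, zero_add]
    simp

lemma mul_star_self_eigen (hA : A.IsHermitian) :
    (hA.eigenvectorUnitary : Matrix (Fin n) (Fin n) ℂ) *
      star (hA.eigenvectorUnitary : Matrix (Fin n) (Fin n) ℂ) = 1 :=
  Unitary.coe_mul_star_self hA.eigenvectorUnitary

lemma matrix_decomp (hA : A.IsHermitian) (hn : 1 ≤ n) :
    A = ((sortDesc hA.eigenvalues ⟨n-1, by omega⟩ : ℝ) : ℂ) • (1 : Matrix (Fin n) (Fin n) ℂ)
      + ∑ k ∈ Finset.range n, ((delta hA k : ℝ) : ℂ) • projOf hA k := by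
  conv_lhs => rw [hA.spectral_theorem, Unitary.conjStarAlgAut_apply]
  rw [diag_decomp hA hn]
  rw [Matrix.mul_add, Matrix.add_mul]
  congr 1
  · rw [Matrix.mul_smul, Matrix.smul_mul, Matrix.mul_one, mul_star_self_eigen hA]
  · rw [Finset.mul_sum, Finset.sum_mul]
    refine Finset.sum_congr rfl (fun k hk => ?_)
    rw [Matrix.mul_smul, Matrix.smul_mul]
    rfl

lemma trace_sq (hA : A.IsHermitian) :
    (A * A).trace = ((∑ i, hA.eigenvalues i ^ 2 : ℝ) : ℂ) := by
  have h := hA.spectral_theorem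
  rw [Unitary.conjStarAlgAut_apply] at h
  set U := (hA.eigenvectorUnitary : Matrix (Fin n) (Fin n) ℂ)
  set D := Matrix.diagonal (RCLike.ofReal ∘ hA.eigenvalues : Fin n → ℂ)
  have key : A * A = U * (D * D) * star U := by
    rw [h]
    calc U * D * star U * (U * D * star U)
        = U * (D * ((star U * U) * D)) * star U := by simp only [Matrix.mul_assoc]
      _ = U * (D * D) * star U := by
          rw [Unitary.coe_star_mul_self hA.eigenvectorUnitary, Matrix.one_mul]
  rw [key, Matrix.trace_mul_cycle, Unitary.coe_star_mul_self hA.eigenvectorUnitary,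
    Matrix.one_mul]
  show (D * D).trace = _
  rw [show D * D = Matrix.diagonal (fun i => ((hA.eigenvalues i ^ 2 : ℝ) : ℂ)) by
    unfold D
    rw [diagonal_mul_diagonal]
    congr 1; funext i
    simp [Function.comp]
    push_cast
    ring]
  rw [Matrix.trace_diagonal]
  push_cast
  rfl


lemma trace_mul_expand {n : ℕ} (s t : ℝ) (P Q : ℕ → Matrix (Fin n) (Fin n) ℂ)
    (δ ε : ℕ → ℝ) (A C : Matrix (Fin n) (Fin n) ℂ)
    (hA : A = ((s:ℝ):ℂ) • (1 : Matrix (Fin n) (Fin n) ℂ)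
        + ∑ k ∈ Finset.range n, ((δ k : ℝ):ℂ) • P k)
    (hC : C = ((t:ℝ):ℂ) • (1 : Matrix (Fin n) (Fin n) ℂ)
        + ∑ l ∈ Finset.range n, ((ε l : ℝ):ℂ) • Q l) :
    (A * C).trace = (s:ℂ)*(t:ℂ)*(n:ℂ)
      + (s:ℂ) * ∑ l ∈ Finset.range n, (ε l:ℂ) * (Q l).trace
      + (t:ℂ) * ∑ k ∈ Finset.range n, (δ k:ℂ) * (P k).trace
      + ∑ k ∈ Finset.range n, ∑ l ∈ Finset.range n,
          (δ k:ℂ) * (ε l:ℂ) * (P k * Q l).trace := by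
  subst hA hC
  rw [Matrix.mul_add, Matrix.add_mul, Matrix.add_mul, Matrix.trace_add, Matrix.trace_add,
    Matrix.trace_add]
  have e1 : ((((s:ℝ):ℂ) • (1 : Matrix (Fin n) (Fin n) ℂ)) * (((t:ℝ):ℂ) • 1)).trace
      = (s:ℂ)*(t:ℂ)*(n:ℂ) := by
    rw [Matrix.smul_mul, Matrix.mul_smul, Matrix.one_mul, smul_smul, Matrix.trace_smul,
      Matrix.trace_one, smul_eq_mul, Fintype.card_fin]
  have e2 : ((∑ k ∈ Finset.range n, ((δ k : ℝ):ℂ) • P k) * (((t:ℝ):ℂ) • 1)).trace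
      = (t:ℂ) * ∑ k ∈ Finset.range n, (δ k:ℂ) * (P k).trace := by
    simp only [Matrix.mul_smul, Matrix.mul_one, Matrix.trace_sum, Matrix.trace_smul,
      smul_eq_mul, Finset.mul_sum]
  have e3 : ((((s:ℝ):ℂ) • (1 : Matrix (Fin n) (Fin n) ℂ))
        * (∑ l ∈ Finset.range n, ((ε l : ℝ):ℂ) • Q l)).trace
      = (s:ℂ) * ∑ l ∈ Finset.range n, (ε l:ℂ) * (Q l).trace := by
    simp only [Matrix.smul_mul, Matrix.one_mul, Matrix.trace_sum, Matrix.trace_smul,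
      smul_eq_mul, Finset.mul_sum]
  have e4 : ((∑ k ∈ Finset.range n, ((δ k : ℝ):ℂ) • P k)
        * (∑ l ∈ Finset.range n, ((ε l : ℝ):ℂ) • Q l)).trace
      = ∑ k ∈ Finset.range n, ∑ l ∈ Finset.range n,
          (δ k:ℂ) * (ε l:ℂ) * (P k * Q l).trace := by
    rw [Finset.sum_mul, Matrix.trace_sum]
    refine Finset.sum_congr rfl (fun k _ => ?_)
    rw [Finset.mul_sum, Matrix.trace_sum]
    refine Finset.sum_congr rfl (fun l _ => ?_)
    rw [Matrix.smul_mul, Matrix.mul_smul, smul_smul, Matrix.trace_smul, smul_eq_mul]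
  rw [e1, e2, e3, e4]
  ring

lemma scalar_mul_expand {n : ℕ} (s t : ℝ) (δ ε : ℕ → ℝ) (a c : Fin n → ℝ)
    (ha : ∀ i, a i = s + ∑ k ∈ Finset.range n, δ k * (if (i:ℕ) < k then 1 else 0))
    (hc : ∀ i, c i = t + ∑ l ∈ Finset.range n, ε l * (if (i:ℕ) < l then 1 else 0)) :
    ∑ i, a i * c i = s*t*n + s * ∑ l ∈ Finset.range n, ε l * l
      + t * ∑ k ∈ Finset.range n, δ k * k
      + ∑ k ∈ Finset.range n, ∑ l ∈ Finset.range n, δ k * ε l * ((min k l : ℕ) : ℝ) := by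
  have expand : ∀ i : Fin n, a i * c i
      = s*t + s * (∑ l ∈ Finset.range n, ε l * (if (i:ℕ) < l then 1 else 0))
        + t * (∑ k ∈ Finset.range n, δ k * (if (i:ℕ) < k then 1 else 0))
        + ∑ k ∈ Finset.range n, ∑ l ∈ Finset.range n,
            δ k * ε l * ((if (i:ℕ) < k then (1:ℝ) else 0) * (if (i:ℕ) < l then 1 else 0)) := by
    intro i
    rw [ha i, hc i]
    have : (∑ k ∈ Finset.range n, δ k * (if (i:ℕ) < k then (1:ℝ) else 0))
        * (∑ l ∈ Finset.range n, ε l * (if (i:ℕ) < l then (1:ℝ) else 0))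
        = ∑ k ∈ Finset.range n, ∑ l ∈ Finset.range n,
            δ k * ε l * ((if (i:ℕ) < k then (1:ℝ) else 0) * (if (i:ℕ) < l then 1 else 0)) := by
      rw [Finset.sum_mul_sum]
      refine Finset.sum_congr rfl (fun k _ => ?_)
      refine Finset.sum_congr rfl (fun l _ => ?_)
      ring
    rw [← this]
    ring
  rw [Finset.sum_congr rfl (fun i _ => expand i)]
  rw [Finset.sum_add_distrib, Finset.sum_add_distrib, Finset.sum_add_distrib]
  congr 1
  · congr 1
    · congr 1
      · rw [Finset.sum_const, Finset.card_univ, Fintype.card_fin, nsmul_eq_mul]; ring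
      · rw [← Finset.mul_sum]
        congr 1
        rw [Finset.sum_comm]
        refine Finset.sum_congr rfl (fun l hl => ?_)
        rw [← Finset.mul_sum, card_lt (le_of_lt (Finset.mem_range.mp hl))]
    · rw [← Finset.mul_sum]
      congr 1
      rw [Finset.sum_comm]
      refine Finset.sum_congr rfl (fun k hk => ?_)
      rw [← Finset.mul_sum, card_lt (le_of_lt (Finset.mem_range.mp hk))]
  · rw [Finset.sum_comm]
    refine Finset.sum_congr rfl (fun k hk => ?_)
    rw [Finset.sum_comm]
    refine Finset.sum_congr rfl (fun l hl => ?_)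
    rw [← Finset.mul_sum, card_lt2 (le_of_lt (Finset.mem_range.mp hk))
      (le_of_lt (Finset.mem_range.mp hl))]

lemma mul_expand {n : ℕ} (s t : ℝ) (P Q : ℕ → Matrix (Fin n) (Fin n) ℂ) (δ ε : ℕ → ℝ) :
    (((s:ℝ):ℂ) • (1:Matrix (Fin n) (Fin n) ℂ) + ∑ k ∈ Finset.range n, ((δ k:ℝ):ℂ) • P k)
      * (((t:ℝ):ℂ) • (1:Matrix (Fin n) (Fin n) ℂ) + ∑ l ∈ Finset.range n, ((ε l:ℝ):ℂ) • Q l)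
    = ((s*t : ℝ):ℂ) • (1:Matrix (Fin n) (Fin n) ℂ)
      + (s:ℂ) • (∑ l ∈ Finset.range n, ((ε l:ℝ):ℂ) • Q l)
      + (t:ℂ) • (∑ k ∈ Finset.range n, ((δ k:ℝ):ℂ) • P k)
      + ∑ k ∈ Finset.range n, ∑ l ∈ Finset.range n, ((δ k * ε l : ℝ):ℂ) • (P k * Q l) := by
  rw [Matrix.mul_add, Matrix.add_mul, Matrix.add_mul]
  have h1 : (((s:ℝ):ℂ) • (1:Matrix (Fin n) (Fin n) ℂ)) * (((t:ℝ):ℂ) • (1:Matrix (Fin n) (Fin n) ℂ))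
      = ((s*t:ℝ):ℂ) • (1:Matrix (Fin n) (Fin n) ℂ) := by
    rw [Matrix.smul_mul, Matrix.mul_smul, Matrix.one_mul, smul_smul]
    norm_cast
  have h2 : (∑ k ∈ Finset.range n, ((δ k:ℝ):ℂ) • P k) * (((t:ℝ):ℂ) • (1:Matrix (Fin n) (Fin n) ℂ))
      = (t:ℂ) • (∑ k ∈ Finset.range n, ((δ k:ℝ):ℂ) • P k) := by
    rw [Matrix.mul_smul, Matrix.mul_one]
  have h3 : (((s:ℝ):ℂ) • (1:Matrix (Fin n) (Fin n) ℂ)) * (∑ l ∈ Finset.range n, ((ε l:ℝ):ℂ) • Q l)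
      = (s:ℂ) • (∑ l ∈ Finset.range n, ((ε l:ℝ):ℂ) • Q l) := by
    rw [Matrix.smul_mul, Matrix.one_mul]
  have h4 : (∑ k ∈ Finset.range n, ((δ k:ℝ):ℂ) • P k) * (∑ l ∈ Finset.range n, ((ε l:ℝ):ℂ) • Q l)
      = ∑ k ∈ Finset.range n, ∑ l ∈ Finset.range n, ((δ k * ε l : ℝ):ℂ) • (P k * Q l) := by
    rw [Finset.sum_mul]
    refine Finset.sum_congr rfl (fun k _ => ?_)
    rw [Finset.mul_sum]
    refine Finset.sum_congr rfl (fun l _ => ?_)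
    rw [Matrix.smul_mul, Matrix.mul_smul, smul_smul]
    norm_cast
  rw [h1, h2, h3, h4]
  abel

end Stmt7Aux

open Stmt7Aux in
theorem stmt7 {n : ℕ} (A B : Matrix (Fin n) (Fin n) ℂ)
    (hA : A.IsHermitian) (hB : B.IsHermitian)
    (h : sortDesc (fun i => sortDesc (hB.add hA).eigenvalues i - sortDesc hA.eigenvalues i)
        = sortDesc hB.eigenvalues) : A * B = B * A := by
  rcases Nat.eq_zero_or_pos n with hn0 | hn
  · subst hn0
    have : Subsingleton (Matrix (Fin 0) (Fin 0) ℂ) := inferInstance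
    exact Subsingleton.elim _ _
  have hC : (B + A).IsHermitian := hB.add hA
  -- abbreviations (as plain defs via have-free notation)
  set a : Fin n → ℝ := sortDesc hA.eigenvalues with ha_def
  set c : Fin n → ℝ := sortDesc hC.eigenvalues with hc_def
  set b : Fin n → ℝ := sortDesc hB.eigenvalues with hb_def
  -- step 1 : sum of squares
  have hsum : ∑ i, b i ^ 2 = ∑ i, (c i - a i)^2 := by
    rw [← h]
    exact sum_sortDesc (fun i => c i - a i) (fun x => x^2)
  -- step 2 : trace identities
  have trA : (A*A).trace = ((∑ i, a i ^2 : ℝ) : ℂ) := by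
    rw [trace_sq hA]
    norm_cast
    exact (sum_sortDesc hA.eigenvalues (fun x => x^2)).symm
  have trB : (B*B).trace = ((∑ i, b i ^2 : ℝ) : ℂ) := by
    rw [trace_sq hB]
    norm_cast
    exact (sum_sortDesc hB.eigenvalues (fun x => x^2)).symm
  have trC : ((B+A)*(B+A)).trace = ((∑ i, c i ^2 : ℝ) : ℂ) := by
    rw [trace_sq hC]
    norm_cast
    exact (sum_sortDesc hC.eigenvalues (fun x => x^2)).symm
  -- step 3 : trace(A*(B+A)) = ∑ a c
  have hreal : ∑ i, (c i - a i)^2 = ∑ i, c i^2 - 2 * ∑ i, (a i * c i) + ∑ i, a i ^2 := by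
    have e : ∀ i : Fin n, (c i - a i)^2 = c i^2 - 2*(a i * c i) + a i^2 := fun i => by ring
    rw [Finset.sum_congr rfl (fun i _ => e i), Finset.sum_add_distrib, Finset.sum_sub_distrib,
      ← Finset.mul_sum]
  have trB' : (B*B).trace = ((B+A)*(B+A)).trace - 2 * (A*(B+A)).trace + (A*A).trace := by
    have hB2 : B = (B+A) - A := (add_sub_cancel_right B A).symm
    have e : B*B = (B+A)*(B+A) - (B+A)*A - A*(B+A) + A*A := by
      conv_lhs => rw [hB2]
      rw [Matrix.sub_mul, Matrix.mul_sub, Matrix.mul_sub]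
      abel
    rw [e, Matrix.trace_add, Matrix.trace_sub, Matrix.trace_sub, Matrix.trace_mul_comm (B+A) A]
    ring
  have hAC : (A*(B+A)).trace = ((∑ i, a i * c i : ℝ) : ℂ) := by
    have h2 : 2 * (A*(B+A)).trace = 2 * ((∑ i, a i * c i : ℝ) : ℂ) := by
      have := trB'
      rw [trA, trB, trC] at this
      rw [hsum, hreal] at this
      push_cast at this ⊢
      linear_combination this
    exact mul_left_cancel₀ two_ne_zero h2
  -- step 4 : decompositions and expansion
  have hdecA := matrix_decomp hA hn
  have hdecC := matrix_decomp hC hn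
  set s : ℝ := a ⟨n-1, by omega⟩
  set t : ℝ := c ⟨n-1, by omega⟩
  have hTr := trace_mul_expand s t (projOf hA) (projOf hC) (delta hA) (delta hC)
    A (B+A) hdecA hdecC
  have hSc := scalar_mul_expand s t (delta hA) (delta hC) a c
    (fun i => scalar_decomp hA hn i) (fun i => scalar_decomp hC hn i)
  -- identify the linear parts
  have hQl : ∀ l ∈ Finset.range n, ((delta hC l:ℝ):ℂ) * (projOf hC l).trace
      = ((delta hC l * l : ℝ) : ℂ) := by
    intro l hl
    rw [trace_projOf hC (le_of_lt (Finset.mem_range.mp hl))]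
    push_cast; ring
  have hPk : ∀ k ∈ Finset.range n, ((delta hA k:ℝ):ℂ) * (projOf hA k).trace
      = ((delta hA k * k : ℝ) : ℂ) := by
    intro k hk
    rw [trace_projOf hA (le_of_lt (Finset.mem_range.mp hk))]
    push_cast; ring
  have key : (∑ k ∈ Finset.range n, ∑ l ∈ Finset.range n,
      ((delta hA k:ℝ):ℂ) * ((delta hC l:ℝ):ℂ) * (projOf hA k * projOf hC l).trace)
      = ((∑ k ∈ Finset.range n, ∑ l ∈ Finset.range n,
          delta hA k * delta hC l * ((min k l : ℕ):ℝ) : ℝ) : ℂ) := by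
    have e1 : (A*(B+A)).trace = ((s*t*n + s * ∑ l ∈ Finset.range n, delta hC l * l
        + t * ∑ k ∈ Finset.range n, delta hA k * k : ℝ) : ℂ)
        + ∑ k ∈ Finset.range n, ∑ l ∈ Finset.range n,
          ((delta hA k:ℝ):ℂ) * ((delta hC l:ℝ):ℂ) * (projOf hA k * projOf hC l).trace := by
      rw [hTr, Finset.sum_congr rfl hQl, Finset.sum_congr rfl hPk]
      push_cast
      ring
    have e2 : ((∑ i, a i * c i : ℝ) : ℂ) = ((s*t*n + s * ∑ l ∈ Finset.range n, delta hC l * l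
        + t * ∑ k ∈ Finset.range n, delta hA k * k : ℝ) : ℂ)
        + ((∑ k ∈ Finset.range n, ∑ l ∈ Finset.range n,
          delta hA k * delta hC l * ((min k l : ℕ):ℝ) : ℝ) : ℂ) := by
      rw [hSc]; push_cast; ring
    have := hAC
    rw [e1, e2] at this
    exact add_left_cancel this
  -- step 5 : spec of the projector trace pairings
  have spec : ∀ k ∈ Finset.range n, ∀ l ∈ Finset.range n,
      (projOf hA k * projOf hC l).trace = (((projOf hA k * projOf hC l).trace.re : ℝ) : ℂ)
      ∧ 0 ≤ (projOf hA k * projOf hC l).trace.re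
      ∧ (projOf hA k * projOf hC l).trace.re ≤ ((min k l : ℕ) : ℝ) := by
    intro k hk l hl
    have hk' := le_of_lt (Finset.mem_range.mp hk)
    have hl' := le_of_lt (Finset.mem_range.mp hl)
    obtain ⟨h1, h2, h3⟩ := trace_PQ_spec (projOf_herm hA k) (projOf_idem hA k)
      (projOf_herm hC l) (projOf_idem hC l)
    obtain ⟨h1', h2', h3'⟩ := trace_PQ_spec (projOf_herm hC l) (projOf_idem hC l)
      (projOf_herm hA k) (projOf_idem hA k)
    have hswap : (projOf hC l * projOf hA k).trace = (projOf hA k * projOf hC l).trace :=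
      Matrix.trace_mul_comm _ _
    rw [hswap] at h3'
    refine ⟨h1, h2, ?_⟩
    rw [trace_projOf hA hk'] at h3
    rw [trace_projOf hC hl'] at h3'
    simp only [Complex.natCast_re] at h3 h3'
    have hmin : ((min k l : ℕ):ℝ) = min (k:ℝ) (l:ℝ) := by push_cast; rfl
    rw [hmin]
    exact le_min h3 h3'
  -- real version of key
  have keyR : ∑ k ∈ Finset.range n, ∑ l ∈ Finset.range n,
      delta hA k * delta hC l * (projOf hA k * projOf hC l).trace.re
      = ∑ k ∈ Finset.range n, ∑ l ∈ Finset.range n,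
        delta hA k * delta hC l * ((min k l : ℕ):ℝ) := by
    have e : (∑ k ∈ Finset.range n, ∑ l ∈ Finset.range n,
        ((delta hA k:ℝ):ℂ) * ((delta hC l:ℝ):ℂ) * (projOf hA k * projOf hC l).trace)
        = ((∑ k ∈ Finset.range n, ∑ l ∈ Finset.range n,
          delta hA k * delta hC l * (projOf hA k * projOf hC l).trace.re : ℝ) : ℂ) := by
      push_cast
      refine Finset.sum_congr rfl fun k hk => Finset.sum_congr rfl fun l hl => ?_
      rw [(spec k hk l hl).1, Complex.ofReal_re]
    rw [e] at key
    exact_mod_cast key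
  -- pointwise vanishing
  have term0 : ∀ k ∈ Finset.range n, ∀ l ∈ Finset.range n,
      delta hA k * delta hC l *
        (((min k l : ℕ):ℝ) - (projOf hA k * projOf hC l).trace.re) = 0 := by
    have hzero : ∑ k ∈ Finset.range n, ∑ l ∈ Finset.range n,
        delta hA k * delta hC l *
          (((min k l : ℕ):ℝ) - (projOf hA k * projOf hC l).trace.re) = 0 := by
      have e : ∀ k ∈ Finset.range n, ∑ l ∈ Finset.range n,
          delta hA k * delta hC l *
            (((min k l : ℕ):ℝ) - (projOf hA k * projOf hC l).trace.re)
          = (∑ l ∈ Finset.range n, delta hA k * delta hC l * ((min k l : ℕ):ℝ))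
            - ∑ l ∈ Finset.range n,
              delta hA k * delta hC l * (projOf hA k * projOf hC l).trace.re := by
        intro k _
        rw [← Finset.sum_sub_distrib]
        exact Finset.sum_congr rfl fun l _ => by ring
      rw [Finset.sum_congr rfl e, Finset.sum_sub_distrib, keyR, sub_self]
    have hnn : ∀ k ∈ Finset.range n, ∀ l ∈ Finset.range n,
        0 ≤ delta hA k * delta hC l *
          (((min k l : ℕ):ℝ) - (projOf hA k * projOf hC l).trace.re) := by
      intro k hk l hl
      have := (spec k hk l hl).2.2
      have h1 := delta_nonneg hA k
      have h2 := delta_nonneg hC l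
      have h3 : 0 ≤ ((min k l : ℕ):ℝ) - (projOf hA k * projOf hC l).trace.re := by linarith
      positivity
    intro k hk l hl
    have outer := (Finset.sum_eq_zero_iff_of_nonneg (fun k hk =>
      Finset.sum_nonneg (fun l hl => hnn k hk l hl))).mp hzero k hk
    exact (Finset.sum_eq_zero_iff_of_nonneg (fun l hl => hnn k hk l hl)).mp outer l hl
  -- per-term commuting
  have comm : ∀ k ∈ Finset.range n, ∀ l ∈ Finset.range n,
      ((delta hA k * delta hC l : ℝ):ℂ) • (projOf hA k * projOf hC l)
      = ((delta hA k * delta hC l : ℝ):ℂ) • (projOf hC l * projOf hA k) := by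
    intro k hk l hl
    rcases eq_or_ne (delta hA k * delta hC l) 0 with hz | hz
    · rw [hz]; simp
    · have hT : (projOf hA k * projOf hC l).trace.re = ((min k l : ℕ):ℝ) := by
        rcases mul_eq_zero.mp (term0 k hk l hl) with h' | h'
        · exact absurd h' hz
        · linarith [sub_eq_zero.mp h']
      have hcomm : projOf hA k * projOf hC l = projOf hC l * projOf hA k := by
        rcases le_total k l with hkl | hkl
        · refine proj_comm_of_trace_eq (projOf_herm hA k) (projOf_idem hA k)
            (projOf_herm hC l) (projOf_idem hC l) ?_
          rw [(spec k hk l hl).1, hT, trace_projOf hA (le_of_lt (Finset.mem_range.mp hk)),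
            min_eq_left hkl]
          norm_cast
        · have h' : (projOf hC l * projOf hA k).trace = (projOf hC l).trace := by
            rw [Matrix.trace_mul_comm, (spec k hk l hl).1, hT,
              trace_projOf hC (le_of_lt (Finset.mem_range.mp hl)), min_eq_right hkl]
            norm_cast
          exact (proj_comm_of_trace_eq (projOf_herm hC l) (projOf_idem hC l)
            (projOf_herm hA k) (projOf_idem hA k) h').symm
      rw [hcomm]
  -- step 6 : conclude
  have e1 : A * (B+A) = ((s*t:ℝ):ℂ) • (1:Matrix (Fin n) (Fin n) ℂ)
      + (s:ℂ) • (∑ l ∈ Finset.range n, ((delta hC l:ℝ):ℂ) • projOf hC l)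
      + (t:ℂ) • (∑ k ∈ Finset.range n, ((delta hA k:ℝ):ℂ) • projOf hA k)
      + ∑ k ∈ Finset.range n, ∑ l ∈ Finset.range n,
          ((delta hA k * delta hC l : ℝ):ℂ) • (projOf hA k * projOf hC l) := by
    exact (congrArg₂ (fun X Y => X * Y) hdecA hdecC).trans
      (mul_expand s t (projOf hA) (projOf hC) (delta hA) (delta hC))
  have e2 : (B+A) * A = ((t*s:ℝ):ℂ) • (1:Matrix (Fin n) (Fin n) ℂ)
      + (t:ℂ) • (∑ k ∈ Finset.range n, ((delta hA k:ℝ):ℂ) • projOf hA k)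
      + (s:ℂ) • (∑ l ∈ Finset.range n, ((delta hC l:ℝ):ℂ) • projOf hC l)
      + ∑ l ∈ Finset.range n, ∑ k ∈ Finset.range n,
          ((delta hC l * delta hA k : ℝ):ℂ) • (projOf hC l * projOf hA k) := by
    exact (congrArg₂ (fun X Y => X * Y) hdecC hdecA).trans
      (mul_expand t s (projOf hC) (projOf hA) (delta hC) (delta hA))
  have ecross : ∑ l ∈ Finset.range n, ∑ k ∈ Finset.range n,
      ((delta hC l * delta hA k : ℝ):ℂ) • (projOf hC l * projOf hA k)
      = ∑ k ∈ Finset.range n, ∑ l ∈ Finset.range n,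
          ((delta hA k * delta hC l : ℝ):ℂ) • (projOf hA k * projOf hC l) := by
    rw [Finset.sum_comm]
    refine Finset.sum_congr rfl fun k hk => Finset.sum_congr rfl fun l hl => ?_
    rw [mul_comm (delta hC l) (delta hA k)]
    exact (comm k hk l hl).symm
  have hfin : A * (B+A) = (B+A) * A := by
    rw [e1, e2, ecross, mul_comm t s]
    abel
  have expand1 : A*B + A*A = B*A + A*A := by
    calc A*B + A*A = A * (B+A) := by rw [Matrix.mul_add]
      _ = (B+A) * A := hfin
      _ = B*A + A*A := by rw [Matrix.add_mul]
  exact add_right_cancel expand1
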